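/- Consider the principal-agent model with a risk-averse agent under limited liability, with von Neumann-Morgenstern function v. A utility profile (x,y) ∈ F is implementable if and only if x ≥ max{r_1 − v⁻¹(c_1), 0} and y ≥ 0. -/

import Mathlib

open Finset Filter

/-- Expected transfer at action `a` (zero for the default action `0`). -/
noncomputable def expT {n k : ℕ} (I : Fin (n + 1) → Fin k → ℝ) (t : Fin k → ℝ)
    (a : Fin (n + 1)) : ℝ :=
  if a = 0 then 0 else ∑ j, I a j * t j

/-- Risk-averse agent's utility at action `a`, with von Neumann-Morgenstern function
`v`: the expected `v`-value of the transfer minus the cost of the action. -/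
noncomputable def uAV {n k : ℕ} (v : ℝ → ℝ) (c : Fin (n + 1) → ℝ)
    (I : Fin (n + 1) → Fin k → ℝ) (t : Fin k → ℝ) (a : Fin (n + 1)) : ℝ :=
  (if a = 0 then 0 else ∑ j, I a j * v (t j)) - c a

/-- Principal's utility at action `a`. -/
noncomputable def uP {n k : ℕ} (r : Fin (n + 1) → ℝ) (I : Fin (n + 1) → Fin k → ℝ)
    (t : Fin k → ℝ) (a : Fin (n + 1)) : ℝ :=
  r a - expT I t a

/-- `I` is an information structure: each non-default row is a distribution over signals. -/
def Stochastic {n k : ℕ} (I : Fin (n + 1) → Fin k → ℝ) : Prop :=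
  ∀ a : Fin (n + 1), a ≠ 0 → (∀ j, 0 ≤ I a j) ∧ ∑ j, I a j = 1

/-- `a` is an equilibrium action for the contract `t` (risk-averse agent): it maximizes
the agent's utility and, among the agent's optimal actions, maximizes the principal's
utility (ties are broken in the principal's favor). -/
def IsEquilibriumV {n k : ℕ} (v : ℝ → ℝ) (r c : Fin (n + 1) → ℝ)
    (I : Fin (n + 1) → Fin k → ℝ) (t : Fin k → ℝ) (a : Fin (n + 1)) : Prop :=
  (∀ b, uAV v c I t b ≤ uAV v c I t a) ∧
    ∀ b, uAV v c I t b = uAV v c I t a → uP r I t b ≤ uP r I t a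

/-- `t` is an optimal limited-liability contract for `I` (risk-averse agent), with
equilibrium action `a`. -/
def OptimalAtV {n k : ℕ} (v : ℝ → ℝ) (r c : Fin (n + 1) → ℝ)
    (I : Fin (n + 1) → Fin k → ℝ) (t : Fin k → ℝ) (a : Fin (n + 1)) : Prop :=
  (∀ j, 0 ≤ t j) ∧ IsEquilibriumV v r c I t a ∧
    ∀ (t' : Fin k → ℝ) (a' : Fin (n + 1)), (∀ j, 0 ≤ t' j) →
      IsEquilibriumV v r c I t' a' → uP r I t' a' ≤ uP r I t a

/-- The utility profile `(x, y)` is implementable (risk-averse agent). -/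
def ImplementsProfileV {n : ℕ} (v : ℝ → ℝ) (r c : Fin (n + 1) → ℝ) (x y : ℝ) : Prop :=
  ∃ (k : ℕ) (_ : 0 < k) (I : Fin (n + 1) → Fin k → ℝ) (t : Fin k → ℝ) (a : Fin (n + 1)),
    Stochastic I ∧ OptimalAtV v r c I t a ∧ uP r I t a = x ∧ uAV v c I t a = y

/-- The action `a` is implementable (risk-averse agent). -/
def ImplementsActionV {n : ℕ} (v : ℝ → ℝ) (r c : Fin (n + 1) → ℝ) (a : Fin (n + 1)) :
    Prop :=
  ∃ (k : ℕ) (_ : 0 < k) (I : Fin (n + 1) → Fin k → ℝ) (t : Fin k → ℝ),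
    Stochastic I ∧ OptimalAtV v r c I t a

/-- The action-transfer pair `(a, s)` is implementable (risk-averse agent). -/
def ImplementsPairV {n : ℕ} (v : ℝ → ℝ) (r c : Fin (n + 1) → ℝ) (a : Fin (n + 1))
    (s : ℝ) : Prop :=
  ∃ (k : ℕ) (_ : 0 < k) (I : Fin (n + 1) → Fin k → ℝ) (t : Fin k → ℝ),
    Stochastic I ∧ OptimalAtV v r c I t a ∧ expT I t a = s

private lemma jensen2 {v : ℝ → ℝ} (hv : ConcaveOn ℝ (Set.Ici 0) v)
    {p t1 t2 : ℝ} (hp0 : 0 ≤ p) (hp1 : p ≤ 1) (h1 : 0 ≤ t1) (h2 : 0 ≤ t2) :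
    p * v t1 + (1 - p) * v t2 ≤ v (p * t1 + (1 - p) * t2) := by
  have := hv.2 (Set.mem_Ici.2 h1) (Set.mem_Ici.2 h2) hp0 (by linarith : (0:ℝ) ≤ 1 - p)
    (by ring)
  simpa [smul_eq_mul] using this

private lemma concave_scale {v : ℝ → ℝ} (hv : ConcaveOn ℝ (Set.Ici 0) v) (hv0 : v 0 = 0)
    {β z : ℝ} (hβ0 : 0 ≤ β) (hβ1 : β ≤ 1) (hz : 0 ≤ z) :
    β * v z ≤ v (β * z) := by
  have := hv.2 (Set.mem_Ici.2 hz) (Set.mem_Ici.2 (le_refl (0:ℝ))) hβ0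
    (by linarith : (0:ℝ) ≤ 1 - β) (by ring)
  simpa [smul_eq_mul, hv0] using this

private lemma v_le_v' {v : ℝ → ℝ} (hm : StrictMonoOn v (Set.Ici 0)) {a b : ℝ}
    (ha : 0 ≤ a) (hb : 0 ≤ b) (h : v a ≤ v b) : a ≤ b :=
  (hm.le_iff_le (Set.mem_Ici.2 ha) (Set.mem_Ici.2 hb)).1 h

/-- In the principal-agent model with a risk-averse agent under limited
liability, a utility profile $(x,y) \in F$ is implementable if and only if
$x \ge \max\{r_1 - v^{-1}(c_1), 0\}$ and $y \ge 0$. -/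
theorem implementable_profile_iff_risk_averse
    (n : ℕ) (hn : 1 ≤ n) (r c : Fin (n + 1) → ℝ)
    (hr0 : r 0 = 0) (hc0 : c 0 = 0)
    (hr_nonneg : ∀ a, 0 ≤ r a)
    (hc_pos : ∀ a : Fin (n + 1), a ≠ 0 → 0 < c a)
    (hc1_min : ∀ a : Fin (n + 1), a ≠ 0 → c 1 ≤ c a)
    (hr1_max : ∀ a : Fin (n + 1), a ≠ 0 → c a = c 1 → r a ≤ r 1)
    (v : ℝ → ℝ)
    (hv_conc : ConcaveOn ℝ (Set.Ici 0) v)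
    (hv_mono : StrictMonoOn v (Set.Ici 0))
    (hv0 : v 0 = 0)
    (hv_nonneg : ∀ z : ℝ, 0 ≤ z → 0 ≤ v z)
    (hv_lim : Tendsto (fun z : ℝ => v z / z) atTop (nhds 0))
    (vinv : ℝ → ℝ)
    (hvinv_nonneg : ∀ u : ℝ, 0 ≤ u → 0 ≤ vinv u)
    (hvinv : ∀ u : ℝ, 0 ≤ u → v (vinv u) = u)
    (x y : ℝ)
    (hF : (∃ i : Fin (n + 1), i ≠ 0 ∧ x ≤ r i ∧ y ≤ v (r i - x) - c i) ∨
      (x = 0 ∧ y = 0)) :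
    ImplementsProfileV v r c x y ↔ max (r 1 - vinv (c 1)) 0 ≤ x ∧ 0 ≤ y := by
  constructor
  · rintro ⟨k, hk, I, t, a, hI, ⟨htn, heq, hopt⟩, hx, hy⟩
    have h10 : (1 : Fin (n+1)) ≠ 0 := by
      simp [Fin.ext_iff, Fin.val_one, Nat.mod_eq_of_lt (by omega : 1 < n+1)]
    have hc1 : 0 < c 1 := hc_pos 1 h10
    have hcnn : ∀ b, 0 ≤ c b := by
      intro b
      by_cases hb : b = 0
      · simp [hb, hc0]
      · exact (hc_pos b hb).le
    constructor
    · rw [max_le_iff]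
      constructor
      · -- flat contract at vinv (c 1)
        set w := vinv (c 1) with hw
        have hw0 : 0 ≤ w := hvinv_nonneg _ hc1.le
        have huA : ∀ b, b ≠ 0 → uAV v c I (fun _ => w) b = c 1 - c b := by
          intro b hb
          simp only [uAV, if_neg hb]
          rw [show (∑ j, I b j * v w) = (∑ j, I b j) * v w from (Finset.sum_mul _ _ _).symm,
            (hI b hb).2, one_mul, hvinv _ hc1.le]
        have huA0 : uAV v c I (fun _ => w) 0 = 0 := by simp [uAV, hc0]
        obtain ⟨bs, hbsS, hbsmax⟩ :=
          (Finset.univ.filter (fun b => uAV v c I (fun _ => w) b = 0)).exists_max_image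
            (uP r I (fun _ => w)) ⟨0, by simp [huA0]⟩
        have hbs0 : uAV v c I (fun _ => w) bs = 0 := (Finset.mem_filter.1 hbsS).2
        have heq' : IsEquilibriumV v r c I (fun _ => w) bs := by
          constructor
          · intro b
            rw [hbs0]
            by_cases hb : b = 0
            · rw [hb, huA0]
            · rw [huA b hb]; linarith [hc1_min b hb]
          · intro b hb
            exact hbsmax b (Finset.mem_filter.2 ⟨Finset.mem_univ _, by rw [hb, hbs0]⟩)
        have h1S : (1 : Fin (n+1)) ∈ Finset.univ.filter
            (fun b => uAV v c I (fun _ => w) b = 0) := by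
          refine Finset.mem_filter.2 ⟨Finset.mem_univ _, ?_⟩
          rw [huA 1 h10]; ring
        have hle := le_trans (hbsmax 1 h1S) (hopt (fun _ => w) bs (fun _ => hw0) heq')
        rw [hx] at hle
        have huP1 : uP r I (fun _ => w) 1 = r 1 - w := by
          simp only [uP, expT, if_neg h10]
          rw [show (∑ j, I 1 j * w) = (∑ j, I 1 j) * w from (Finset.sum_mul _ _ _).symm,
            (hI 1 h10).2, one_mul]
        rw [huP1] at hle
        exact hle
      · -- zero contract
        have huA : ∀ b, uAV v c I (fun _ => 0) b = - c b := by
          intro b; simp [uAV, hv0]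
        have heq' : IsEquilibriumV v r c I (fun _ => 0) 0 := by
          constructor
          · intro b; rw [huA, huA, hc0]; simpa using hcnn b
          · intro b hb
            rw [huA, huA, hc0, neg_zero, neg_eq_zero] at hb
            have hb0 : b = 0 := by
              by_contra hc
              exact absurd hb (ne_of_gt (hc_pos b hc))
            rw [hb0]
        have hle := hopt (fun _ => 0) 0 (fun _ => le_rfl) heq'
        rw [hx] at hle
        simpa [uP, expT, hr0] using hle
    · have h0 := heq.1 0
      rw [hy] at h0
      simpa [uAV, hc0] using h0
  · rintro ⟨hx, hy⟩
    have hx0 : 0 ≤ x := le_trans (le_max_right _ _) hx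
    have hxr1 : r 1 - vinv (c 1) ≤ x := le_trans (le_max_left _ _) hx
    rcases hF with ⟨i, hi0, hxi, hyi⟩ | ⟨hxe, hye⟩
    · have h10 : (1 : Fin (n+1)) ≠ 0 := by
        simp [Fin.ext_iff, Fin.val_one, Nat.mod_eq_of_lt (by omega : 1 < n+1)]
      have hc1 : 0 < c 1 := hc_pos 1 h10
      have hci1 : c 1 ≤ c i := hc1_min i hi0
      have hci : 0 < c i := hc_pos i hi0
      have hciy : 0 < c i + y := by linarith
      have hc1y : 0 < c 1 + y := by linarith
      set T := r i - x with hTdef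
      have hvT : c i + y ≤ v T := by rw [hTdef]; linarith
      have hTnn : 0 ≤ T := sub_nonneg.2 hxi
      have hT0 : 0 < T := by
        rcases hTnn.lt_or_eq with h | h
        · exact h
        · exfalso; rw [← h, hv0] at hvT; linarith
      -- find the payment level s via IVT
      obtain ⟨M, hMT, hM⟩ : ∃ M, T ≤ M ∧ v M / M < (c i + y) / T := by
        have h1 : ∀ᶠ z in atTop, v z / z < (c i + y) / T :=
          hv_lim.eventually_lt_const (by positivity)
        obtain ⟨M, hM1, hM2⟩ := ((eventually_ge_atTop T).and h1).exists
        exact ⟨M, hM1, hM2⟩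
      have hM0 : 0 < M := lt_of_lt_of_le hT0 hMT
      have hvcont : ContinuousOn (fun z => T * v z - (c i + y) * z) (Set.Icc T M) := by
        have h := hv_conc.continuousOn_interior
        rw [interior_Ici] at h
        exact (continuousOn_const.mul (h.mono (fun z hz => Set.mem_Ioi.2
          (lt_of_lt_of_le hT0 hz.1)))).sub (continuousOn_const.mul continuousOn_id)
      have hgT : (0:ℝ) ≤ T * v T - (c i + y) * T := by nlinarith
      have hgM : T * v M - (c i + y) * M ≤ 0 := by
        have := (div_lt_div_iff₀ hM0 hT0).1 hM
        nlinarith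
      obtain ⟨s, hsmem, hgs⟩ := intermediate_value_Icc' hMT hvcont ⟨hgM, hgT⟩
      have hTs : T ≤ s := hsmem.1
      have hs0 : 0 < s := lt_of_lt_of_le hT0 hTs
      have hgs' : T * v s = (c i + y) * s := by
        have : T * v s - (c i + y) * s = 0 := hgs
        linarith
      set q := T / s with hqdef
      have hq0 : 0 < q := div_pos hT0 hs0
      have hq1 : q ≤ 1 := (div_le_one hs0).2 hTs
      have hqs : q * s = T := div_mul_cancel₀ T hs0.ne'
      have hqvs : q * v s = c i + y := by
        rw [hqdef, div_mul_eq_mul_div, hgs', mul_div_assoc, div_self hs0.ne', mul_one]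
      set β := (c 1 + y) / (c i + y) with hβdef
      have hβ0 : 0 < β := div_pos hc1y hciy
      have hβ1 : β ≤ 1 := (div_le_one hciy).2 (by linarith)
      have hβci : β * (c i + y) = c 1 + y := div_mul_cancel₀ _ hciy.ne'
      -- the key chain r 1 - x ≤ β * T
      have hvinvTle : vinv (c i + y) ≤ T :=
        v_le_v' hv_mono (hvinv_nonneg _ hciy.le) hTnn (by rw [hvinv _ hciy.le]; exact hvT)
      have hchain : r 1 - x ≤ β * T := by
        have h1 : vinv (c 1) ≤ vinv (c 1 + y) := by
          apply v_le_v' hv_mono (hvinv_nonneg _ hc1.le) (hvinv_nonneg _ hc1y.le)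
          rw [hvinv _ hc1.le, hvinv _ hc1y.le]; linarith
        have h2 : vinv (c 1 + y) ≤ β * vinv (c i + y) := by
          apply v_le_v' hv_mono (hvinv_nonneg _ hc1y.le)
            (mul_nonneg hβ0.le (hvinv_nonneg _ hciy.le))
          rw [hvinv _ hc1y.le]
          calc c 1 + y = β * (c i + y) := hβci.symm
            _ = β * v (vinv (c i + y)) := by rw [hvinv _ hciy.le]
            _ ≤ v (β * vinv (c i + y)) :=
                concave_scale hv_conc hv0 hβ0.le hβ1 (hvinv_nonneg _ hciy.le)
        have h3 : β * vinv (c i + y) ≤ β * T := mul_le_mul_of_nonneg_left hvinvTle hβ0.le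
        linarith
      -- the construction
      set p : Fin (n+1) → ℝ := fun b => if b = i then q else β * q with hpdef
      set I : Fin (n+1) → Fin 2 → ℝ := fun b j => if j = 0 then p b else 1 - p b with hIdef
      set t : Fin 2 → ℝ := fun j => if j = 0 then s else 0 with htdef
      clear_value T q β p I t
      have hp_pos : ∀ b, 0 < p b := by
        intro b; rw [hpdef]; dsimp only
        split
        · exact hq0
        · exact mul_pos hβ0 hq0
      have hp_le1 : ∀ b, p b ≤ 1 := by
        intro b; rw [hpdef]; dsimp only
        split
        · exact hq1
        · calc β * q ≤ 1 * q := mul_le_mul_of_nonneg_right hβ1 hq0.le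
            _ = q := one_mul q
            _ ≤ 1 := hq1
      have hpi : p i = q := by rw [hpdef]; simp
      have hpb : ∀ b, b ≠ i → p b = β * q := by
        intro b hb; rw [hpdef]; simp [hb]
      have hEsum : ∀ (b : Fin (n+1)) (g : Fin 2 → ℝ),
          (∑ j, I b j * g j) = p b * g 0 + (1 - p b) * g 1 := by
        intro b g
        rw [Fin.sum_univ_two]
        simp [hIdef]
      have hstoch : Stochastic I := by
        intro b hb
        constructor
        · intro j
          rw [hIdef]; dsimp only
          split
          · exact (hp_pos b).le
          · linarith [hp_le1 b]
        · rw [Fin.sum_univ_two]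
          simp [hIdef]
      -- utilities at the designed contract
      have huAV : ∀ b : Fin (n+1), b ≠ 0 → uAV v c I t b = p b * v s - c b := by
        intro b hb
        rw [uAV, if_neg hb, hEsum b (fun j => v (t j))]
        simp [htdef, hv0]
      have huAi : uAV v c I t i = y := by
        rw [huAV i hi0, hpi, hqvs]; ring
      have huAb : ∀ b : Fin (n+1), b ≠ 0 → b ≠ i → uAV v c I t b = c 1 + y - c b := by
        intro b hb hbi
        rw [huAV b hb, hpb b hbi, mul_assoc, hqvs, hβci]
      have huA0 : uAV v c I t 0 = 0 := by simp [uAV, hc0]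
      have hexpTt : ∀ b : Fin (n+1), b ≠ 0 → expT I t b = p b * s := by
        intro b hb
        rw [expT, if_neg hb, hEsum b t]
        simp [htdef]
      have huPi : uP r I t i = x := by
        rw [uP, hexpTt i hi0, hpi, hqs, hTdef]; ring
      refine ⟨2, two_pos, I, t, i, hstoch, ⟨?_, ⟨?_, ?_⟩, ?_⟩, huPi, huAi⟩
      · -- transfers nonnegative
        intro j; rw [htdef]; dsimp only; split
        · exact hs0.le
        · exact le_rfl
      · -- agent's optimality at i
        intro b
        rw [huAi]
        by_cases hb0 : b = 0
        · rw [hb0, huA0]; exact hy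
        · by_cases hbi : b = i
          · rw [hbi, huAi]
          · rw [huAb b hb0 hbi]
            have := hc1_min b hb0
            linarith
      · -- tie-breaking at i
        intro b hb
        rw [huAi] at hb
        rw [huPi]
        by_cases hb0 : b = 0
        · rw [hb0]; simp [uP, expT, hr0]; exact hx0
        · by_cases hbi : b = i
          · rw [hbi, huPi]
          · rw [huAb b hb0 hbi] at hb
            have hcb : c b = c 1 := by linarith
            have hrb : r b ≤ r 1 := hr1_max b hb0 hcb
            rw [uP, hexpTt b hb0, hpb b hbi]
            have : β * q * s = β * T := by rw [mul_assoc, hqs]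
            rw [this]
            linarith
      · -- principal's optimality
        intro t' a' ht' heq'
        rw [huPi]
        by_cases ha0 : a' = 0
        · rw [ha0]; simp [uP, expT, hr0]; exact hx0
        have hw0 : 0 ≤ t' 0 := ht' 0
        have hw1 : 0 ≤ t' 1 := ht' 1
        have huAV' : ∀ b : Fin (n+1), b ≠ 0 →
            uAV v c I t' b = p b * v (t' 0) + (1 - p b) * v (t' 1) - c b := by
          intro b hb
          rw [uAV, if_neg hb, hEsum b (fun j => v (t' j))]
        have hexp' : ∀ b : Fin (n+1), b ≠ 0 →
            expT I t' b = p b * t' 0 + (1 - p b) * t' 1 := by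
          intro b hb
          rw [expT, if_neg hb, hEsum b t']
        have hir : (0:ℝ) ≤ p a' * v (t' 0) + (1 - p a') * v (t' 1) - c a' := by
          have h0 := heq'.1 0
          rw [huAV' a' ha0] at h0
          simpa [uAV, hc0] using h0
        by_cases hcase : c i = c 1
        · -- fully pooled case : β = 1, all rows equal
          have hβeq : β = 1 := by rw [hβdef, hcase]; exact div_self hc1y.ne'
          have hpall : ∀ b, p b = q := by
            intro b
            by_cases hbi : b = i
            · rw [hbi, hpi]
            · rw [hpb b hbi, hβeq, one_mul]
          have hca : c a' = c 1 := by
            have h1 := heq'.1 1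
            rw [huAV' 1 h10, huAV' a' ha0, hpall 1, hpall a'] at h1
            exact le_antisymm (by linarith) (hc1_min a' ha0)
          have hra : r a' ≤ r 1 := hr1_max a' ha0 hca
          rw [hpall a'] at hir
          have hj := jensen2 hv_conc hq0.le hq1 hw0 hw1
          have hEv : c 1 ≤ v (q * t' 0 + (1 - q) * t' 1) := by rw [← hca]; linarith
          have hEge : vinv (c 1) ≤ q * t' 0 + (1 - q) * t' 1 := by
            apply v_le_v' hv_mono (hvinv_nonneg _ hc1.le)
            · have : 0 ≤ 1 - q := by linarith
              positivity
            · rw [hvinv _ hc1.le]; exact hEv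
          rw [uP, hexp' a' ha0, hpall a']
          linarith
        · -- separated case
          have hcilt : c 1 < c i := lt_of_le_of_ne hci1 (fun h => hcase h.symm)
          have h1i : (1 : Fin (n+1)) ≠ i := by
            intro h; rw [← h] at hcilt; exact lt_irrefl _ hcilt
          have hβlt : β < 1 := by
            rw [hβdef]; exact (div_lt_one hciy).2 (by linarith)
          by_cases hai : a' = i
          · -- implementing i requires paying at least T
            subst hai
            have h1 := heq'.1 1
            rw [huAV' 1 h10, huAV' a' hi0, hpb 1 h1i, hpi] at h1
            -- (1-β) q (v w0 - v w1) ≥ c a' - c 1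
            have hkey : c a' + y ≤ q * (v (t' 0) - v (t' 1)) := by
              have h1mβ : (1 - β) * (c a' + y) = c a' - c 1 := by
                linear_combination (-1 : ℝ) * hβci
              have hfac : (1 - β) * (c a' + y) ≤ (1 - β) * (q * (v (t' 0) - v (t' 1))) := by
                rw [h1mβ]; ring_nf at h1 ⊢; linarith
              have := (mul_le_mul_iff_right₀ (by linarith : (0:ℝ) < 1 - β)).1 hfac
              linarith
            have hvv1 : 0 ≤ v (t' 1) := hv_nonneg _ hw1
            have hvs : q * v s ≤ q * v (t' 0) := by
              rw [hqvs]
              have h5 : q * (v (t' 0) - v (t' 1)) ≤ q * v (t' 0) :=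
                mul_le_mul_of_nonneg_left (by linarith) hq0.le
              linarith
            have hvsle : v s ≤ v (t' 0) := (mul_le_mul_iff_right₀ hq0).1 hvs
            have hsle : s ≤ t' 0 := v_le_v' hv_mono hs0.le hw0 hvsle
            rw [uP, hexp' a' hi0, hpi]
            have hE : T ≤ q * t' 0 + (1 - q) * t' 1 := by
              have h5 : q * s ≤ q * t' 0 := mul_le_mul_of_nonneg_left hsle hq0.le
              have h6 : 0 ≤ (1 - q) * t' 1 := mul_nonneg (by linarith) hw1
              linarith [hqs]
            linarith
          · -- pooled action : payoff at most r 1 - vinv (c 1)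
            have hca : c a' = c 1 := by
              have h1 := heq'.1 1
              rw [huAV' 1 h10, huAV' a' ha0, hpb 1 h1i, hpb a' hai] at h1
              exact le_antisymm (by linarith) (hc1_min a' ha0)
            have hra : r a' ≤ r 1 := hr1_max a' ha0 hca
            rw [hpb a' hai] at hir
            have hβq0 : 0 ≤ β * q := (mul_pos hβ0 hq0).le
            have hβq1 : β * q ≤ 1 := by
              calc β * q ≤ 1 * q := mul_le_mul_of_nonneg_right hβ1 hq0.le
                _ = q := one_mul q
                _ ≤ 1 := hq1
            have hj := jensen2 hv_conc hβq0 hβq1 hw0 hw1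
            have hEv : c 1 ≤ v (β * q * t' 0 + (1 - β * q) * t' 1) := by
              rw [← hca]; linarith
            have hEge : vinv (c 1) ≤ β * q * t' 0 + (1 - β * q) * t' 1 := by
              apply v_le_v' hv_mono (hvinv_nonneg _ hc1.le)
              · have : 0 ≤ 1 - β * q := by linarith
                positivity
              · rw [hvinv _ hc1.le]; exact hEv
            rw [uP, hexp' a' ha0, hpb a' hai]
            linarith
    · subst hxe; subst hye
      have h10 : (1 : Fin (n+1)) ≠ 0 := by
        simp [Fin.ext_iff, Fin.val_one, Nat.mod_eq_of_lt (by omega : 1 < n+1)]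
      have hc1 : 0 < c 1 := hc_pos 1 h10
      refine ⟨1, one_pos, fun _ _ => 1, fun _ => 0, 0, fun b hb => ⟨fun _ => zero_le_one, by simp⟩,
        ⟨fun _ => le_rfl, ?_, ?_⟩, by simp [uP, expT, hr0], by simp [uAV, hc0]⟩
      · -- equilibrium at 0
        have huA : ∀ b, uAV (k := 1) v c (fun _ _ => (1:ℝ)) (fun _ => (0:ℝ)) b = - c b := by
          intro b; simp [uAV, hv0]
        constructor
        · intro b; rw [huA, huA, hc0]
          by_cases hb : b = 0
          · simp [hb, hc0]
          · simpa using (hc_pos b hb).le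
        · intro b hb
          rw [huA, huA, hc0, neg_zero, neg_eq_zero] at hb
          have hb0 : b = 0 := by
            by_contra hcon
            exact absurd hb (ne_of_gt (hc_pos b hcon))
          rw [hb0]
      · -- optimality
        intro t' a' ht' heq'
        have huP0 : uP (k := 1) r (fun _ _ => (1:ℝ)) (fun _ => (0:ℝ)) 0 = 0 := by
          simp [uP, expT, hr0]
        rw [huP0]
        by_cases ha0 : a' = 0
        · simp [ha0, uP, expT, hr0]
        · have huA' : ∀ b, b ≠ (0 : Fin (n+1)) →
              uAV (k := 1) v c (fun _ _ => (1:ℝ)) t' b = v (t' 0) - c b := by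
            intro b hb; simp [uAV, if_neg hb]
          have hca : c a' = c 1 := by
            have h1 := heq'.1 1
            rw [huA' 1 h10, huA' a' ha0] at h1
            exact le_antisymm (by linarith) (hc1_min a' ha0)
          have hra : r a' ≤ r 1 := hr1_max a' ha0 hca
          have h0 := heq'.1 0
          rw [huA' a' ha0] at h0
          simp only [uAV, if_pos rfl, hc0, sub_zero, ite_true] at h0
          norm_num at h0
          -- 0 ≤ v (t' 0) - c a'
          have hvw : c 1 ≤ v (t' 0) := by rw [← hca]; linarith
          have hwge : vinv (c 1) ≤ t' 0 := by
            apply v_le_v' hv_mono (hvinv_nonneg _ hc1.le) (ht' 0)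
            rw [hvinv _ hc1.le]; exact hvw
          have huPa : uP (k := 1) r (fun _ _ => (1:ℝ)) t' a' = r a' - t' 0 := by
            simp [uP, expT, if_neg ha0]
          rw [huPa]
          linarith
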